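/- arXiv:2103.02722 — 4 statements merged into one kernel-verified Lean document; each statement's English description precedes it below -/
import Mathlib

section
/- Let f(x) = α e^{Tx} s be the density of a matrix-exponential distribution with parameters (α, T, s), where all eigenvalues of T have strictly negative real part, and let λ ≥ 0. Then the exponentially tilted density f_λ(x) = e^{-λx} f(x) / ∫₀^∞ e^{-λr} f(r) dr equals (α / (α(λI−T)^{-1}s)) e^{(T−λI)x} s; in particular f_λ is again a matrix-exponential density, with parameters (α/(α(λI−T)^{-1}s), T−λI, s). -/
open scoped Matrix
open MeasureTheory

open NormedSpace

attribute [local instance] Matrix.linftyOpSemiNormedRing Matrix.linftyOpNormedRing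
  Matrix.linftyOpNormedAlgebra

lemma spec_exp_subset {p : ℕ} (M : Matrix (Fin p) (Fin p) ℂ) :
    spectrum ℂ (exp M) ⊆ (fun μ : ℂ => Complex.exp μ) '' spectrum ℂ M := by
  intro ν hν
  set e := Matrix.toLinAlgEquiv' (R := ℂ) (n := Fin p) with he
  have hspec : ∀ X : Matrix (Fin p) (Fin p) ℂ, spectrum ℂ (e X) = spectrum ℂ X :=
    fun X => AlgEquiv.spectrum_eq e X
  have hν' : Module.End.HasEigenvalue (e (exp M)) ν := by
    rw [Module.End.hasEigenvalue_iff_mem_spectrum, hspec]; exact hν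
  set E := Module.End.eigenspace (e (exp M)) ν with hE
  have hEbot : E ≠ ⊥ := hν'
  haveI : Nontrivial E := Submodule.nontrivial_iff_ne_bot.2 hEbot
  have hcomm : exp M * M = M * exp M := ((Commute.refl M).exp_right).symm
  have hinv : ∀ v ∈ E, e M v ∈ E := by
    intro v hv
    rw [hE, Module.End.mem_eigenspace_iff] at hv ⊢
    have h1 : e (exp M) (e M v) = e (exp M * M) v := by rw [map_mul]; rfl
    rw [h1, hcomm, map_mul]
    show e M (e (exp M) v) = ν • e M v
    rw [hv, _root_.map_smul]
  set g := (e M).restrict hinv with hg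
  obtain ⟨μ, hμ⟩ := Module.End.exists_eigenvalue g
  obtain ⟨w, hw⟩ := hμ.exists_hasEigenvector
  set w0 : Fin p → ℂ := (w : Fin p → ℂ) with hw0def
  have hw0ne : w0 ≠ 0 := fun h => hw.right (by exact_mod_cast Subtype.ext h)
  have hMw0 : e M w0 = μ • w0 := by
    have := congrArg (Subtype.val) hw.apply_eq_smul
    simpa [hg, LinearMap.restrict_apply] using this
  have hμspec : μ ∈ spectrum ℂ M := by
    rw [← hspec M, ← Module.End.hasEigenvalue_iff_mem_spectrum]
    exact Module.End.hasEigenvalue_of_hasEigenvector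
      ⟨Module.End.mem_eigenspace_iff.2 hMw0, hw0ne⟩
  refine ⟨μ, hμspec, ?_⟩
  have hEw0 : e (exp M) w0 = ν • w0 := Module.End.mem_eigenspace_iff.1 w.2
  set N : Matrix (Fin p) (Fin p) ℂ := M - μ • 1 with hN
  have hNw0 : e N w0 = 0 := by
    rw [hN, map_sub, _root_.map_smul, map_one]
    simp [hMw0, Module.End.one_apply]
  have hsplit : exp M = Complex.exp μ • exp N := by
    have hc : Commute (μ • (1 : Matrix (Fin p) (Fin p) ℂ)) N := (Commute.one_left N).smul_left μ
    have hM' : M = μ • 1 + N := by rw [hN]; abel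
    rw [hM', Matrix.exp_add_of_commute _ _ hc]
    have h2 : μ • (1 : Matrix (Fin p) (Fin p) ℂ) = algebraMap ℂ _ μ := by
      simp [Algebra.algebraMap_eq_smul_one]
    erw [h2, ← NormedSpace.algebraMap_exp_comm, ← Complex.exp_eq_exp_ℂ,
      Algebra.algebraMap_eq_smul_one, smul_mul_assoc, one_mul]
  let Ψ : Matrix (Fin p) (Fin p) ℂ →ₗ[ℂ] (Fin p → ℂ) :=
    { toFun := fun X => e X w0
      map_add' := by intro a b; show e (a+b) w0 = e a w0 + e b w0; rw [map_add]; rfl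
      map_smul' := by intro c a; show e (c • a) w0 = c • e a w0; rw [_root_.map_smul]; rfl }
  let Ψc : Matrix (Fin p) (Fin p) ℂ →L[ℂ] (Fin p → ℂ) := LinearMap.toContinuousLinearMap Ψ
  have hexpN : e (exp N) w0 = w0 := by
    have h1 : exp N = ∑' n : ℕ, ((n.factorial : ℂ)⁻¹) • N ^ n := by
      rw [NormedSpace.exp_eq_tsum (𝕂 := ℂ)]
    have hsum : Summable fun n : ℕ => ((n.factorial : ℂ)⁻¹) • N ^ n :=
      NormedSpace.expSeries_summable' (𝕂 := ℂ) N
    have h2 : Ψc (exp N) = ∑' n : ℕ, Ψc (((n.factorial : ℂ)⁻¹) • N ^ n) := by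
      rw [h1]; exact Ψc.map_tsum hsum
    have h3 : ∀ n : ℕ, n ≠ 0 → Ψc (((n.factorial : ℂ)⁻¹) • N ^ n) = 0 := by
      intro n hn
      obtain ⟨k, rfl⟩ := Nat.exists_eq_succ_of_ne_zero hn
      rw [_root_.map_smul]
      have : Ψc (N ^ (k + 1)) = 0 := by
        show e (N ^ (k+1)) w0 = 0
        rw [map_pow, pow_succ, Module.End.mul_apply, hNw0, map_zero]
      rw [this, smul_zero]
    have h4 : Ψc (exp N) = Ψc ((Nat.factorial 0 : ℂ)⁻¹ • N ^ 0) := by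
      rw [h2]; exact tsum_eq_single 0 h3
    have : Ψc (exp N) = w0 := by
      rw [h4]; show e ((Nat.factorial 0 : ℂ)⁻¹ • N ^ 0) w0 = w0
      simp [Module.End.one_apply]
    exact this
  rw [hsplit, _root_.map_smul, LinearMap.smul_apply, hexpN] at hEw0
  have := sub_eq_zero.2 hEw0
  rw [← sub_smul, smul_eq_zero] at this
  rcases this with h | h
  · exact (sub_eq_zero.1 h)
  · exact absurd h hw0ne

lemma specRadius_exp_lt_one {p : ℕ} (M : Matrix (Fin p) (Fin p) ℂ)
    (hM : ∀ μ ∈ spectrum ℂ M, μ.re < 0) :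
    spectralRadius ℂ (exp M) < 1 := by
  rcases Set.eq_empty_or_nonempty (spectrum ℂ (exp M)) with h | h
  · rw [spectralRadius]
    simp [h]
  · obtain ⟨k, hk, hk2⟩ := spectrum.exists_nnnorm_eq_spectralRadius_of_nonempty h
    rw [← hk2]
    obtain ⟨μ, hμ, rfl⟩ := spec_exp_subset M hk
    have : ‖Complex.exp μ‖ < 1 := by
      rw [Complex.norm_exp]
      exact Real.exp_lt_one_iff.mpr (hM μ hμ)
    exact_mod_cast ENNReal.coe_lt_one_iff.2 (by exact_mod_cast this)

lemma pow_norm_geom {p : ℕ} (B : Matrix (Fin p) (Fin p) ℂ)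
    (hB : spectralRadius ℂ B < 1) :
    ∃ r : ℝ, 0 < r ∧ r < 1 ∧ ∃ C : ℝ, 1 ≤ C ∧ ∀ n : ℕ, ‖B ^ n‖ ≤ C * r ^ n := by
  obtain ⟨r, hr1, hr2⟩ := ENNReal.lt_iff_exists_nnreal_btwn.1 hB
  have hr2' : (r : ℝ) < 1 := by exact_mod_cast hr2
  have hr0 : 0 < r := by
    rcases (zero_le : 0 ≤ r).lt_or_eq with h | h
    · exact h
    · exfalso; rw [← h] at hr1; simp at hr1
  -- Gelfand's formula
  have hG := spectrum.pow_nnnorm_pow_one_div_tendsto_nhds_spectralRadius B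
  have hev : ∀ᶠ n : ℕ in Filter.atTop,
      (‖B ^ n‖₊ : ENNReal) ^ (1 / (n : ℝ)) < (r : ENNReal) := by
    exact hG.eventually (Filter.Tendsto.eventually_lt_const hr1 Filter.tendsto_id) |>.mono
      (fun n hn => hn)
  obtain ⟨N, hN⟩ := Filter.eventually_atTop.1 hev
  have key : ∀ n : ℕ, N ≤ n → 1 ≤ n → ‖B ^ n‖ ≤ (r : ℝ) ^ n := by
    intro n hn hn1
    have h1 := (hN n hn).le
    have h2 : ((‖B ^ n‖₊ : ENNReal) ^ (1 / (n : ℝ))) ^ (n : ℝ) ≤ (r : ENNReal) ^ (n : ℝ) :=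
      ENNReal.rpow_le_rpow h1 (by positivity)
    have hnne : (n : ℝ) ≠ 0 := by positivity
    rw [← ENNReal.rpow_mul, one_div, inv_mul_cancel₀ hnne, ENNReal.rpow_one] at h2
    have h3 : (‖B ^ n‖₊ : ENNReal) ≤ ((r ^ n : NNReal) : ENNReal) := by
      rw [ENNReal.coe_pow, ← ENNReal.rpow_natCast ((r : ENNReal)) n]
      exact h2
    have h4 : ‖B ^ n‖₊ ≤ r ^ n := by exact_mod_cast h3
    calc ‖B ^ n‖ = (‖B ^ n‖₊ : ℝ) := rfl
      _ ≤ ((r ^ n : NNReal) : ℝ) := by exact_mod_cast h4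
      _ = (r : ℝ) ^ n := by push_cast; ring
  set C : ℝ := 1 + ∑ n ∈ Finset.range (N + 1), ‖B ^ n‖ / (r : ℝ) ^ n with hC
  have hCsum : 0 ≤ ∑ n ∈ Finset.range (N + 1), ‖B ^ n‖ / (r : ℝ) ^ n :=
    Finset.sum_nonneg fun n _ => by positivity
  have hC1 : 1 ≤ C := by rw [hC]; linarith
  refine ⟨r, hr0, hr2', C, hC1, fun n => ?_⟩
  rcases le_or_gt n N with h | h
  · have hterm : ‖B ^ n‖ / (r : ℝ) ^ n ≤ C := by
      rw [hC]
      have : ‖B ^ n‖ / (r : ℝ) ^ n ≤ ∑ m ∈ Finset.range (N + 1), ‖B ^ m‖ / (r : ℝ) ^ m :=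
        Finset.single_le_sum (f := fun m => ‖B ^ m‖ / (r : ℝ) ^ m)
          (fun m _ => by positivity) (Finset.mem_range.2 (Nat.lt_succ_of_le h))
      linarith
    have hrn : (0:ℝ) < (r : ℝ) ^ n := by positivity
    calc ‖B ^ n‖ = (‖B ^ n‖ / (r : ℝ) ^ n) * (r : ℝ) ^ n := by field_simp
      _ ≤ C * (r : ℝ) ^ n := by exact mul_le_mul_of_nonneg_right hterm hrn.le
  · calc ‖B ^ n‖ ≤ (r:ℝ) ^ n := key n (by omega) (by omega)
        _ = 1 * (r:ℝ) ^ n := (one_mul _).symm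
        _ ≤ C * (r:ℝ) ^ n := by
            have : (0:ℝ) ≤ (r:ℝ)^n := by positivity
            nlinarith

lemma exp_decay_complex {p : ℕ} (M : Matrix (Fin p) (Fin p) ℂ)
    (hM : ∀ μ ∈ spectrum ℂ M, μ.re < 0) :
    ∃ C r : ℝ, 0 < C ∧ 0 < r ∧ r < 1 ∧
      ∀ t : ℝ, 0 ≤ t → ‖exp (t • M)‖ ≤ C * r ^ t := by
  obtain ⟨r, hr0, hr1, C, hC1, hpow⟩ := pow_norm_geom (exp M) (specRadius_exp_lt_one M hM)
  -- bound on [0,1]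
  have hcont : ContinuousOn (fun u : ℝ => exp (u • M)) (Set.Icc 0 1) :=
    (NormedSpace.exp_continuous.comp (continuous_id.smul continuous_const)).continuousOn
  obtain ⟨C₁, hC₁⟩ := isCompact_Icc.exists_bound_of_continuousOn hcont
  set C₂ : ℝ := max C₁ 1 with hC₂
  have hC₂pos : 0 < C₂ := lt_of_lt_of_le zero_lt_one (le_max_right _ _)
  refine ⟨C₂ * C / r, r, by positivity, hr0, hr1, ?_⟩
  intro t ht
  set n : ℕ := ⌊t⌋₊ with hn
  set u : ℝ := t - n with hu
  have hu0 : 0 ≤ u := by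
    rw [hu]; exact sub_nonneg.2 (Nat.floor_le ht)
  have hu1 : u ≤ 1 := by
    rw [hu]
    have := (Nat.lt_floor_add_one t).le
    linarith
  have hsplit : exp (t • M) = exp (u • M) * (exp M) ^ n := by
    have h1 : t • M = u • M + (n : ℝ) • M := by
      rw [hu, sub_smul, sub_add_cancel]
    rw [h1, Matrix.exp_add_of_commute _ _ (((Commute.refl M).smul_left u).smul_right (n:ℝ)),
      Nat.cast_smul_eq_nsmul, Matrix.exp_nsmul]
  have hb1 : ‖exp (u • M)‖ ≤ C₂ := le_trans (hC₁ u ⟨hu0, hu1⟩) (le_max_left _ _)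
  have hb2 : ‖(exp M) ^ n‖ ≤ C * r ^ n := hpow n
  have hrn : (r : ℝ) ^ n ≤ r ^ (t - 1) := by
    rw [← Real.rpow_natCast r n]
    apply Real.rpow_le_rpow_of_exponent_ge hr0 hr1.le
    have := Nat.sub_one_lt_floor t
    exact this.le
  calc ‖exp (t • M)‖ ≤ ‖exp (u • M)‖ * ‖(exp M) ^ n‖ := by
        rw [hsplit]; exact norm_mul_le _ _
    _ ≤ C₂ * (C * r ^ n) := by
        apply mul_le_mul hb1 hb2 (norm_nonneg _) hC₂pos.le
    _ ≤ C₂ * (C * r ^ (t - 1)) := by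
        have h0C : (0:ℝ) ≤ C := le_trans zero_le_one hC1
        have := mul_le_mul_of_nonneg_left hrn h0C
        exact mul_le_mul_of_nonneg_left this hC₂pos.le
    _ = C₂ * C / r * r ^ t := by
        rw [Real.rpow_sub hr0, Real.rpow_one]
        field_simp

lemma norm_map_complex {p : ℕ} (X : Matrix (Fin p) (Fin p) ℝ) :
    ‖X.map (algebraMap ℝ ℂ)‖ = ‖X‖ := by
  have : ‖X.map (algebraMap ℝ ℂ)‖₊ = ‖X‖₊ := by
    rw [Matrix.linfty_opNNNorm_def, Matrix.linfty_opNNNorm_def]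
    congr 1
    ext i
    congr 1
    ext j
    simp [Matrix.map_apply]
  exact congrArg (fun x : NNReal => (x : ℝ)) this

lemma entry_abs_le {p : ℕ} (X : Matrix (Fin p) (Fin p) ℝ) (i j : Fin p) :
    |X i j| ≤ ‖X‖ := by
  have : ‖X i j‖₊ ≤ ‖X‖₊ := by
    rw [Matrix.linfty_opNNNorm_def]
    calc ‖X i j‖₊ ≤ ∑ j', ‖X i j'‖₊ :=
          Finset.single_le_sum (f := fun j' => ‖X i j'‖₊) (fun _ _ => zero_le) (Finset.mem_univ j)
      _ ≤ _ := Finset.le_sup (f := fun i => ∑ j', ‖X i j'‖₊) (Finset.mem_univ i)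
  exact_mod_cast this

lemma map_exp_real {p : ℕ} (X : Matrix (Fin p) (Fin p) ℝ) :
    (exp X).map (algebraMap ℝ ℂ) = exp (X.map (algebraMap ℝ ℂ)) := by
  have hφ : Continuous fun Y : Matrix (Fin p) (Fin p) ℝ =>
      ((algebraMap ℝ ℂ).mapMatrix Y : Matrix (Fin p) (Fin p) ℂ) := by
    exact Continuous.matrix_map continuous_id (continuous_algebraMap ℝ ℂ)
  have := NormedSpace.map_exp ((algebraMap ℝ ℂ).mapMatrix
    (m := Fin p)) hφ X
  rw [show (exp X).map (algebraMap ℝ ℂ) = (algebraMap ℝ ℂ).mapMatrix (exp X) from rfl]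
  exact this

lemma exp_decay_real {p : ℕ} (A : Matrix (Fin p) (Fin p) ℝ)
    (hA : ∀ μ ∈ spectrum ℂ (A.map (algebraMap ℝ ℂ)), μ.re < 0) :
    ∃ C r : ℝ, 0 < C ∧ 0 < r ∧ r < 1 ∧
      ∀ t : ℝ, 0 ≤ t → ‖exp (t • A)‖ ≤ C * r ^ t := by
  obtain ⟨C, r, hC, hr0, hr1, hb⟩ := exp_decay_complex (A.map (algebraMap ℝ ℂ)) hA
  refine ⟨C, r, hC, hr0, hr1, fun t ht => ?_⟩
  have h1 : (exp (t • A)).map (algebraMap ℝ ℂ) = exp (t • A.map (algebraMap ℝ ℂ)) := by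
    rw [map_exp_real]
    congr 1
    ext i j
    simp [Matrix.map_apply, Complex.real_smul]
  calc ‖exp (t • A)‖ = ‖(exp (t • A)).map (algebraMap ℝ ℂ)‖ := (norm_map_complex _).symm
    _ = ‖exp (t • A.map (algebraMap ℝ ℂ))‖ := by rw [h1]
    _ ≤ C * r ^ t := hb t ht

open MeasureTheory in
lemma integral_me {p : ℕ} (A : Matrix (Fin p) (Fin p) ℝ) (hdet : IsUnit A.det)
    (hA : ∀ μ ∈ spectrum ℂ (A.map (algebraMap ℝ ℂ)), μ.re < 0) (α s : Fin p → ℝ) :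
    ∫ t in Set.Ioi (0:ℝ), α ⬝ᵥ (exp (t • A)).mulVec s = -(α ⬝ᵥ A⁻¹.mulVec s) := by
  obtain ⟨C, r, hC, hr0, hr1, hb⟩ := exp_decay_real A hA
  set g : ℝ → ℝ := fun t => α ⬝ᵥ (exp (t • A)).mulVec s with hg
  -- the linear functional X ↦ α ⬝ᵥ (A⁻¹ * X) s
  let L : Matrix (Fin p) (Fin p) ℝ →ₗ[ℝ] ℝ :=
    { toFun := fun X => α ⬝ᵥ (A⁻¹ * X).mulVec s
      map_add' := by
        intro X Y
        simp [Matrix.mul_add, Matrix.add_mulVec, dotProduct_add]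
      map_smul' := by
        intro c X
        simp [Matrix.mul_smul, Matrix.smul_mulVec, dotProduct_smul] }
  let Lc := LinearMap.toContinuousLinearMap L
  set F : ℝ → ℝ := fun t => Lc (exp (t • A)) with hF
  -- derivative
  have hderiv : ∀ t : ℝ, HasDerivAt F (g t) t := by
    intro t
    have h1 : HasDerivAt (fun u : ℝ => exp (u • A)) (exp (t • A) * A) t :=
      hasDerivAt_exp_smul_const A t
    have h2 := Lc.hasFDerivAt.comp_hasDerivAt t h1
    convert h2 using 1
    show g t = Lc (exp (t • A) * A)
    have hcomm : exp (t • A) * A = A * exp (t • A) :=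
      (((Commute.refl A).smul_right t).exp_right).symm.eq
    show g t = α ⬝ᵥ (A⁻¹ * (exp (t • A) * A)).mulVec s
    rw [hcomm, ← Matrix.mul_assoc, Matrix.nonsing_inv_mul A hdet, Matrix.one_mul]
    all_goals rfl
  -- tendsto 0
  have htend0 : Filter.Tendsto (fun t : ℝ => exp (t • A)) Filter.atTop (nhds 0) := by
    refine squeeze_zero_norm' (a := fun t : ℝ => C * r ^ t) ?_ ?_
    · filter_upwards [Filter.eventually_ge_atTop (0:ℝ)] with t ht
      exact hb t ht
    · have := (tendsto_rpow_atTop_of_base_lt_one r (by linarith) hr1).const_mul C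
      simpa using this
  have htendF : Filter.Tendsto F Filter.atTop (nhds 0) := by
    have := (Lc.continuous.tendsto 0).comp htend0
    simpa [hF, Function.comp_def] using this
  -- integrability
  have hgcont : Continuous g := by
    let L2 : Matrix (Fin p) (Fin p) ℝ →ₗ[ℝ] ℝ :=
      { toFun := fun X => α ⬝ᵥ X.mulVec s
        map_add' := by intro X Y; simp [Matrix.add_mulVec, dotProduct_add]
        map_smul' := by intro c X; simp [Matrix.smul_mulVec, dotProduct_smul] }
    exact (LinearMap.toContinuousLinearMap L2).continuous.comp
      (NormedSpace.exp_continuous.comp (continuous_id.smul continuous_const))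
  have hbound : ∀ t : ℝ, t ∈ Set.Ioi (0:ℝ) →
      ‖g t‖ ≤ ((∑ i, |α i|) * (∑ j, |s j|) * C) * r ^ t := by
    intro t ht
    have hX := hb t (le_of_lt ht)
    set X := exp (t • A) with hX'
    have h1 : |α ⬝ᵥ X.mulVec s| ≤ (∑ i, |α i|) * (∑ j, |s j|) * ‖X‖ := by
      calc |α ⬝ᵥ X.mulVec s| = |∑ i, α i * X.mulVec s i| := rfl
        _ ≤ ∑ i, |α i * X.mulVec s i| := Finset.abs_sum_le_sum_abs _ _
        _ ≤ ∑ i, |α i| * ((∑ j, |s j|) * ‖X‖) := by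
            apply Finset.sum_le_sum
            intro i _
            rw [abs_mul]
            apply mul_le_mul_of_nonneg_left _ (abs_nonneg _)
            calc |X.mulVec s i| = |∑ j, X i j * s j| := rfl
              _ ≤ ∑ j, |X i j * s j| := Finset.abs_sum_le_sum_abs _ _
              _ ≤ ∑ j, ‖X‖ * |s j| := by
                  apply Finset.sum_le_sum
                  intro j _
                  rw [abs_mul]
                  exact mul_le_mul_of_nonneg_right (entry_abs_le X i j) (abs_nonneg _)
              _ = ‖X‖ * ∑ j, |s j| := by rw [← Finset.mul_sum]
              _ = (∑ j, |s j|) * ‖X‖ := mul_comm _ _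
        _ = (∑ i, |α i|) * ((∑ j, |s j|) * ‖X‖) := by rw [← Finset.sum_mul]
        _ = (∑ i, |α i|) * (∑ j, |s j|) * ‖X‖ := (mul_assoc _ _ _).symm
    calc ‖g t‖ = |α ⬝ᵥ X.mulVec s| := rfl
      _ ≤ (∑ i, |α i|) * (∑ j, |s j|) * ‖X‖ := h1
      _ ≤ (∑ i, |α i|) * (∑ j, |s j|) * (C * r ^ t) := by
          apply mul_le_mul_of_nonneg_left hX
          positivity
      _ = ((∑ i, |α i|) * (∑ j, |s j|) * C) * r ^ t := by ring
  have hrint : IntegrableOn (fun t : ℝ => ((∑ i, |α i|) * (∑ j, |s j|) * C) * r ^ t)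
      (Set.Ioi (0:ℝ)) := by
    have hlog : 0 < -Real.log r := by
      have := Real.log_neg hr0 hr1
      linarith
    have h1 : IntegrableOn (fun t : ℝ => Real.exp (-(-Real.log r) * t)) (Set.Ioi (0:ℝ)) :=
      exp_neg_integrableOn_Ioi 0 hlog
    have h2 : (fun t : ℝ => Real.exp (-(-Real.log r) * t)) = fun t : ℝ => r ^ t := by
      funext t
      rw [neg_neg, Real.rpow_def_of_pos hr0]
    rw [h2] at h1
    exact h1.const_mul _
  have hint : IntegrableOn g (Set.Ioi (0:ℝ)) := by
    apply Integrable.mono' hrint hgcont.aestronglyMeasurable.restrict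
    exact (ae_restrict_iff' measurableSet_Ioi).2 (Filter.Eventually.of_forall hbound)
  have := integral_Ioi_of_hasDerivAt_of_tendsto' (a := 0) (f := F) (f' := g)
    (fun t _ => hderiv t) hint htendF
  rw [this]
  have h0 : F 0 = α ⬝ᵥ A⁻¹.mulVec s := by
    show α ⬝ᵥ (A⁻¹ * exp ((0:ℝ) • A)).mulVec s = _
    rw [zero_smul, NormedSpace.exp_zero, Matrix.mul_one]
  rw [h0, zero_sub]

/-- The exponential tilting of a matrix-exponential density f(x) = α e^{Tx} s is again
matrix-exponential, with parameters (α / (α(λI−T)⁻¹s), T − λI, s). -/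
theorem stmt1 (p : ℕ) (T : Matrix (Fin p) (Fin p) ℝ)
    (hT : ∀ μ ∈ spectrum ℂ (T.map (algebraMap ℝ ℂ)), μ.re < 0)
    (lam : ℝ) (hlam : 0 ≤ lam) (α s : Fin p → ℝ)
    (f : ℝ → ℝ) (hf : ∀ x, f x = α ⬝ᵥ (NormedSpace.exp (x • T)).mulVec s)
    (hZ : 0 < ∫ r in Set.Ioi (0 : ℝ), Real.exp (-lam * r) * f r) :
    ∀ x, 0 ≤ x →
      Real.exp (-lam * x) * f x / (∫ r in Set.Ioi (0 : ℝ), Real.exp (-lam * r) * f r)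
        = ((α ⬝ᵥ (lam • (1 : Matrix (Fin p) (Fin p) ℝ) - T)⁻¹.mulVec s)⁻¹ • α) ⬝ᵥ
            (NormedSpace.exp (x • (T - lam • (1 : Matrix (Fin p) (Fin p) ℝ)))).mulVec s := by
  intro x hx
  set A := T - lam • (1 : Matrix (Fin p) (Fin p) ℝ) with hA
  have hmap : A.map (algebraMap ℝ ℂ) =
      T.map (algebraMap ℝ ℂ) - algebraMap ℂ (Matrix (Fin p) (Fin p) ℂ) (lam : ℂ) := by
    ext i j
    simp [hA, Matrix.map_apply, Matrix.sub_apply, Matrix.smul_apply, Matrix.one_apply,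
      Matrix.algebraMap_matrix_apply, apply_ite (algebraMap ℝ ℂ)]
    split <;> simp
  have hAspec : ∀ μ ∈ spectrum ℂ (A.map (algebraMap ℝ ℂ)), μ.re < 0 := by
    intro μ hμ
    rw [hmap, ← spectrum.sub_singleton_eq] at hμ
    obtain ⟨a, ha, b, hb, hab⟩ := hμ
    rw [Set.mem_singleton_iff] at hb
    subst hb
    have := hT a ha
    have : μ.re = a.re - lam := by rw [← hab]; simp
    rw [this]
    have := hT a ha
    linarith
  have hdet : IsUnit A.det := by
    by_contra h
    have h0 : ¬ IsUnit (A.map (algebraMap ℝ ℂ)) := by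
      rw [Matrix.isUnit_iff_isUnit_det]
      rw [show A.map (algebraMap ℝ ℂ) = (algebraMap ℝ ℂ).mapMatrix A from rfl, ← RingHom.map_det]
      intro hu
      exact h (isUnit_iff_ne_zero.2 fun hh => hu.ne_zero (by rw [hh]; simp))
    have h2 : (0:ℂ) ∈ spectrum ℂ (A.map (algebraMap ℝ ℂ)) :=
      spectrum.zero_mem_iff ℂ |>.2 h0
    simpa using hAspec 0 h2
  have hexp : ∀ t : ℝ, Real.exp (-lam * t) * f t = α ⬝ᵥ (exp (t • A)).mulVec s := by
    intro t
    rw [hf t]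
    have hsm : t • (lam • (1 : Matrix (Fin p) (Fin p) ℝ)) = (lam * t) • 1 := by
      rw [smul_smul, mul_comm]
    have h1 : t • A = (-(lam * t)) • (1 : Matrix (Fin p) (Fin p) ℝ) + t • T := by
      rw [hA, smul_sub, hsm, neg_smul, ← sub_eq_neg_add]
    have hc : Commute ((-(lam * t)) • (1 : Matrix (Fin p) (Fin p) ℝ)) (t • T) :=
      (((Commute.one_left (t • T)).smul_left _))
    rw [h1, Matrix.exp_add_of_commute _ _ hc]
    have h2 : exp ((-(lam * t)) • (1 : Matrix (Fin p) (Fin p) ℝ)) =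
        Real.exp (-(lam * t)) • 1 := by
      erw [← Algebra.algebraMap_eq_smul_one, ← NormedSpace.algebraMap_exp_comm,
        ← Real.exp_eq_exp_ℝ, Algebra.algebraMap_eq_smul_one]
    rw [h2, Matrix.smul_mul, Matrix.one_mul, Matrix.smul_mulVec, dotProduct_smul,
      smul_eq_mul]
    ring_nf
  have hZval : (∫ r in Set.Ioi (0 : ℝ), Real.exp (-lam * r) * f r) =
      -(α ⬝ᵥ A⁻¹.mulVec s) := by
    rw [show (fun r : ℝ => Real.exp (-lam * r) * f r)
        = fun t : ℝ => α ⬝ᵥ (exp (t • A)).mulVec s from funext hexp]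
    exact integral_me A hdet hAspec α s
  have hneg : (lam • (1 : Matrix (Fin p) (Fin p) ℝ) - T)⁻¹ = -A⁻¹ := by
    have h1 : lam • (1 : Matrix (Fin p) (Fin p) ℝ) - T = -A := by rw [hA, neg_sub]
    rw [h1]
    apply Matrix.inv_eq_right_inv
    rw [Matrix.neg_mul, Matrix.mul_neg, neg_neg, Matrix.mul_nonsing_inv A hdet]
  rw [hexp x, hZval, hneg]
  rw [Matrix.neg_mulVec, dotProduct_neg, smul_dotProduct, smul_eq_mul,
    div_eq_inv_mul]
end

section
/- Let (α, T, s) be real matrix-exponential parameters of dimension p with T = T⁺ − T⁻ the sign decomposition (T⁺ with nonnegative off-diagonal and nonpositive diagonal entries, T⁻ nonnegative) and s = s⁺ − s⁻ with s⁺, s⁻ ≥ 0. Then for every λ ≥ 0, every x ≥ 0 and every i ∈ {1,…,p}: e_iᵀ e^{(T−λI)x} s = (e_iᵀ, 0) exp([[T⁺−λI, T⁻],[T⁻, T⁺−λI]] x) [s; −s], and −e_iᵀ e^{(T−λI)x} s = (0, e_iᵀ) exp([[T⁺−λI, T⁻],[T⁻, T⁺−λI]] x) [s; −s]. -/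
open scoped Matrix

open NormedSpace in
private lemma pow_mulVec_elim' {p : ℕ} (A B : Matrix (Fin p) (Fin p) ℝ) (v : Fin p → ℝ) (n : ℕ) :
    ((Matrix.fromBlocks A B B A) ^ n).mulVec (Sum.elim v (-v))
      = Sum.elim (((A - B) ^ n).mulVec v) (-((A - B) ^ n).mulVec v) := by
  induction n with
  | zero => simp
  | succ n ih =>
      rw [pow_succ', pow_succ', ← Matrix.mulVec_mulVec, ← Matrix.mulVec_mulVec, ih,
        Matrix.fromBlocks_mulVec]
      ext j
      cases j <;>
        simp [Matrix.sub_mulVec, Matrix.mulVec_neg, sub_mul,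
          Matrix.mulVec_mulVec, Pi.sub_apply] <;> ring

open NormedSpace in
private lemma exp_mulVec_elim' {p : ℕ} (A B : Matrix (Fin p) (Fin p) ℝ) (v : Fin p → ℝ) :
    (exp (Matrix.fromBlocks A B B A)).mulVec (Sum.elim v (-v))
      = Sum.elim ((exp (A - B)).mulVec v) (-(exp (A - B)).mulVec v) := by
  letI : SeminormedRing (Matrix (Fin p ⊕ Fin p) (Fin p ⊕ Fin p) ℝ) := Matrix.linftyOpSemiNormedRing
  letI : NormedRing (Matrix (Fin p ⊕ Fin p) (Fin p ⊕ Fin p) ℝ) := Matrix.linftyOpNormedRing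
  letI : NormedAlgebra ℝ (Matrix (Fin p ⊕ Fin p) (Fin p ⊕ Fin p) ℝ) := Matrix.linftyOpNormedAlgebra
  letI : SeminormedRing (Matrix (Fin p) (Fin p) ℝ) := Matrix.linftyOpSemiNormedRing
  letI : NormedRing (Matrix (Fin p) (Fin p) ℝ) := Matrix.linftyOpNormedRing
  letI : NormedAlgebra ℝ (Matrix (Fin p) (Fin p) ℝ) := Matrix.linftyOpNormedAlgebra
  let f0 : Matrix (Fin p ⊕ Fin p) (Fin p ⊕ Fin p) ℝ →ₗ[ℝ] (Fin p ⊕ Fin p → ℝ) :=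
    { toFun := fun M => M.mulVec (Sum.elim v (-v))
      map_add' := fun M N => Matrix.add_mulVec M N _
      map_smul' := fun c M => Matrix.smul_mulVec c M _ }
  let g0 : Matrix (Fin p) (Fin p) ℝ →ₗ[ℝ] (Fin p ⊕ Fin p → ℝ) :=
    { toFun := fun N => Sum.elim (N.mulVec v) (-(N.mulVec v))
      map_add' := by
        intro M N
        ext j
        cases j <;> simp [Matrix.add_mulVec] <;> ring
      map_smul' := by
        intro c M
        ext j
        cases j <;> simp [Matrix.smul_mulVec] }
  let f : Matrix (Fin p ⊕ Fin p) (Fin p ⊕ Fin p) ℝ →L[ℝ] (Fin p ⊕ Fin p → ℝ) :=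
    { toLinearMap := f0, cont := f0.continuous_of_finiteDimensional }
  let g : Matrix (Fin p) (Fin p) ℝ →L[ℝ] (Fin p ⊕ Fin p → ℝ) :=
    { toLinearMap := g0, cont := g0.continuous_of_finiteDimensional }
  have h1 : Summable fun n : ℕ => ((n.factorial : ℝ)⁻¹) • (Matrix.fromBlocks A B B A) ^ n :=
    expSeries_summable' _
  have h2 : Summable fun n : ℕ => ((n.factorial : ℝ)⁻¹) • (A - B) ^ n :=
    expSeries_summable' _
  have key : ∀ n : ℕ, f (((n.factorial : ℝ)⁻¹) • (Matrix.fromBlocks A B B A) ^ n)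
      = g (((n.factorial : ℝ)⁻¹) • (A - B) ^ n) := by
    intro n
    simp only [map_smul, f, g, f0, g0, ContinuousLinearMap.coe_mk', LinearMap.coe_mk,
      AddHom.coe_mk]
    rw [pow_mulVec_elim']
  have : f (exp (Matrix.fromBlocks A B B A)) = g (exp (A - B)) := by
    rw [exp_eq_tsum ℝ, exp_eq_tsum ℝ, f.map_tsum h1, g.map_tsum h2]
    exact tsum_congr key
  exact this

/-- Theorem 1 identities: e_iᵀ e^{(T−λI)x} s = (e_iᵀ,0) e^{Gx} [s;−s] and
−e_iᵀ e^{(T−λI)x} s = (0,e_iᵀ) e^{Gx} [s;−s], where G = [[T⁺−λI,T⁻],[T⁻,T⁺−λI]]. -/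
theorem stmt8 (p : ℕ) (T Tp Tm : Matrix (Fin p) (Fin p) ℝ) (s sp sm : Fin p → ℝ)
    (hTdec : T = Tp - Tm)
    (hTpOff : ∀ i j, i ≠ j → 0 ≤ Tp i j) (hTpDiag : ∀ i, Tp i i ≤ 0)
    (hTm : ∀ i j, 0 ≤ Tm i j)
    (hsdec : s = sp - sm) (hsp : ∀ i, 0 ≤ sp i) (hsm : ∀ i, 0 ≤ sm i)
    (lam : ℝ) (hlam : 0 ≤ lam) (x : ℝ) (hx : 0 ≤ x) (i : Fin p) :
    (Pi.single i 1) ⬝ᵥ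
        (NormedSpace.exp (x • (T - lam • (1 : Matrix (Fin p) (Fin p) ℝ)))).mulVec s
      = (Sum.elim (Pi.single i 1) 0) ⬝ᵥ
          (NormedSpace.exp (x • Matrix.fromBlocks
              (Tp - lam • (1 : Matrix (Fin p) (Fin p) ℝ)) Tm
              Tm (Tp - lam • (1 : Matrix (Fin p) (Fin p) ℝ)))).mulVec (Sum.elim s (-s)) ∧
    -((Pi.single i 1) ⬝ᵥ
        (NormedSpace.exp (x • (T - lam • (1 : Matrix (Fin p) (Fin p) ℝ)))).mulVec s)
      = (Sum.elim 0 (Pi.single i 1)) ⬝ᵥ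
          (NormedSpace.exp (x • Matrix.fromBlocks
              (Tp - lam • (1 : Matrix (Fin p) (Fin p) ℝ)) Tm
              Tm (Tp - lam • (1 : Matrix (Fin p) (Fin p) ℝ)))).mulVec (Sum.elim s (-s)) := by
  have hblock : x • Matrix.fromBlocks (Tp - lam • (1 : Matrix (Fin p) (Fin p) ℝ)) Tm Tm
        (Tp - lam • (1 : Matrix (Fin p) (Fin p) ℝ))
      = Matrix.fromBlocks (x • (Tp - lam • (1 : Matrix (Fin p) (Fin p) ℝ))) (x • Tm) (x • Tm)
        (x • (Tp - lam • (1 : Matrix (Fin p) (Fin p) ℝ))) :=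
    Matrix.fromBlocks_smul x _ _ _ _
  have hsub : x • (Tp - lam • (1 : Matrix (Fin p) (Fin p) ℝ)) - x • Tm
      = x • (T - lam • (1 : Matrix (Fin p) (Fin p) ℝ)) := by
    rw [hTdec]; module
  have hmain := exp_mulVec_elim' (x • (Tp - lam • (1 : Matrix (Fin p) (Fin p) ℝ))) (x • Tm) s
  rw [hsub] at hmain
  rw [hblock, hmain]
  constructor
  · simp [dotProduct, Fintype.sum_sum_type, Pi.single_apply]
  · simp [dotProduct, Fintype.sum_sum_type, Pi.single_apply]
end

section
/- Let (α, T, s) be real matrix-exponential parameters with sign decompositions T = T⁺ − T⁻, s = s⁺ − s⁻, α = w⁺α⁺ − w⁻α⁻ as above, and let λ ≥ 0 with α(λI−T)^{-1}s ≠ 0. Set α̂⁺ = (w⁺/(w⁺+w⁻)) α⁺ and α̂⁻ = (w⁻/(w⁺+w⁻)) α⁻ (assuming w⁺ + w⁻ > 0). Then the tilted density f_λ(x) = (α(λI−T)^{-1}s)^{-1} α e^{(T−λI)x} s satisfies f_λ(x) = ((w⁺+w⁻)/(α(λI−T)^{-1}s)) · (α̂⁺, α̂⁻) exp([[T⁺−λI,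 T⁻],[T⁻, T⁺−λI]] x) [s; −s] for all x ≥ 0. -/
open scoped Matrix

open NormedSpace in
lemma aux_exp_fromBlocks_mulVec {n : Type*} [Fintype n] [DecidableEq n]
    (P Q : Matrix n n ℝ) (v : n → ℝ) :
    (exp (Matrix.fromBlocks P Q Q P)).mulVec (Sum.elim v (-v)) =
      Sum.elim ((exp (P - Q)).mulVec v) (-((exp (P - Q)).mulVec v)) := by
  letI : SeminormedRing (Matrix (n ⊕ n) (n ⊕ n) ℝ) := Matrix.linftyOpSemiNormedRing
  letI : NormedRing (Matrix (n ⊕ n) (n ⊕ n) ℝ) := Matrix.linftyOpNormedRing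
  letI : NormedAlgebra ℝ (Matrix (n ⊕ n) (n ⊕ n) ℝ) := Matrix.linftyOpNormedAlgebra
  letI : SeminormedRing (Matrix n n ℝ) := Matrix.linftyOpSemiNormedRing
  letI : NormedRing (Matrix n n ℝ) := Matrix.linftyOpNormedRing
  letI : NormedAlgebra ℝ (Matrix n n ℝ) := Matrix.linftyOpNormedAlgebra
  set M : Matrix (n ⊕ n) (n ⊕ n) ℝ := Matrix.fromBlocks P Q Q P with hM
  set B : Matrix n n ℝ := P - Q with hB
  set w : (n ⊕ n) → ℝ := Sum.elim v (-v) with hw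
  -- key power identity
  have key : ∀ k : ℕ, M ^ k *ᵥ w = Sum.elim (B ^ k *ᵥ v) (-(B ^ k *ᵥ v)) := by
    intro k
    induction k with
    | zero => simp [hw, Matrix.one_mulVec]
    | succ k ih =>
      rw [pow_succ', ← Matrix.mulVec_mulVec, ih, hM]
      rw [Matrix.fromBlocks_mulVec]
      simp [Matrix.mulVec_neg, Matrix.sub_mulVec, hB, pow_succ', ← Matrix.mulVec_mulVec]
      abel_nf
  -- continuous linear maps
  let F : Matrix (n ⊕ n) (n ⊕ n) ℝ →ₗ[ℝ] ((n ⊕ n) → ℝ) :=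
    { toFun := fun X => X *ᵥ w
      map_add' := fun A B => Matrix.add_mulVec _ _ _
      map_smul' := fun c A => Matrix.smul_mulVec c A _ }
  let G : Matrix n n ℝ →ₗ[ℝ] (n → ℝ) :=
    { toFun := fun X => X *ᵥ v
      map_add' := fun A B => Matrix.add_mulVec _ _ _
      map_smul' := fun c A => Matrix.smul_mulVec c A _ }
  let H : (n → ℝ) →ₗ[ℝ] ((n ⊕ n) → ℝ) :=
    { toFun := fun u => Sum.elim u (-u)
      map_add' := by
        intro a b; funext j; cases j <;> simp <;> ring
      map_smul' := by
        intro c a; funext j; cases j <;> simp }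
  have hsumM : Summable (fun k : ℕ => ((k.factorial : ℝ)⁻¹) • M ^ k) :=
    NormedSpace.expSeries_summable' (𝕂 := ℝ) M
  have hsumB : Summable (fun k : ℕ => ((k.factorial : ℝ)⁻¹) • B ^ k) :=
    NormedSpace.expSeries_summable' (𝕂 := ℝ) B
  have hsumG : Summable (fun k : ℕ => ((k.factorial : ℝ)⁻¹) • (B ^ k *ᵥ v)) := by
    have h := hsumB.map G.toAddMonoidHom G.continuous_of_finiteDimensional
    refine h.congr fun k => ?_
    show G (((k.factorial : ℝ)⁻¹) • B ^ k) = _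
    rw [map_smul]
    rfl
  calc exp M *ᵥ w = F.toContinuousLinearMap (∑' k : ℕ, ((k.factorial : ℝ)⁻¹) • M ^ k) := by
        rw [NormedSpace.exp_eq_tsum ℝ]; rfl
    _ = ∑' k : ℕ, F.toContinuousLinearMap (((k.factorial : ℝ)⁻¹) • M ^ k) :=
        F.toContinuousLinearMap.map_tsum hsumM
    _ = ∑' k : ℕ, H.toContinuousLinearMap (((k.factorial : ℝ)⁻¹) • (B ^ k *ᵥ v)) := by
        refine tsum_congr fun k => ?_
        show (((k.factorial : ℝ)⁻¹) • M ^ k) *ᵥ w =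
          Sum.elim (((k.factorial : ℝ)⁻¹) • (B ^ k *ᵥ v)) (-(((k.factorial : ℝ)⁻¹) • (B ^ k *ᵥ v)))
        rw [Matrix.smul_mulVec, key k]
        funext j; cases j <;> simp
    _ = H.toContinuousLinearMap (∑' k : ℕ, ((k.factorial : ℝ)⁻¹) • (B ^ k *ᵥ v)) :=
        (H.toContinuousLinearMap.map_tsum hsumG).symm
    _ = H.toContinuousLinearMap (G.toContinuousLinearMap
          (∑' k : ℕ, ((k.factorial : ℝ)⁻¹) • B ^ k)) := by
        rw [G.toContinuousLinearMap.map_tsum hsumB]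
        congr 1
        refine tsum_congr fun k => ?_
        show ((k.factorial : ℝ)⁻¹) • (B ^ k *ᵥ v) = (((k.factorial : ℝ)⁻¹) • B ^ k) *ᵥ v
        rw [Matrix.smul_mulVec]
    _ = Sum.elim ((exp B).mulVec v) (-((exp B).mulVec v)) := by
        rw [NormedSpace.exp_eq_tsum ℝ]; rfl

/-- Theorem 2 (eq. (10)): the tilted density f_λ equals
((w⁺+w⁻)/(α(λI−T)⁻¹s)) (α̂⁺,α̂⁻) e^{Gx} [s;−s]. -/
theorem stmt10 (p : ℕ) (T Tp Tm : Matrix (Fin p) (Fin p) ℝ) (α s sp sm : Fin p → ℝ)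
    (hTdec : T = Tp - Tm)
    (hTpOff : ∀ i j, i ≠ j → 0 ≤ Tp i j) (hTpDiag : ∀ i, Tp i i ≤ 0)
    (hTm : ∀ i j, 0 ≤ Tm i j)
    (hsdec : s = sp - sm) (hsp : ∀ i, 0 ≤ sp i) (hsm : ∀ i, 0 ≤ sm i)
    (wp wm : ℝ) (hwp : wp = ∑ i, max 0 (α i)) (hwm : wm = ∑ i, max 0 (-(α i)))
    (hw : 0 < wp + wm)
    (αp αm : Fin p → ℝ)
    (hαp : ∀ i, αp i = if 0 < wp then max 0 (α i) / wp else 0)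
    (hαm : ∀ i, αm i = if 0 < wm then max 0 (-(α i)) / wm else 0)
    (lam : ℝ) (hlam : 0 ≤ lam)
    (hZ : α ⬝ᵥ (lam • (1 : Matrix (Fin p) (Fin p) ℝ) - T)⁻¹.mulVec s ≠ 0)
    (αhp αhm : Fin p → ℝ)
    (hαhp : αhp = (wp / (wp + wm)) • αp) (hαhm : αhm = (wm / (wp + wm)) • αm)
    (flam : ℝ → ℝ)
    (hflam : ∀ x, flam x = (α ⬝ᵥ (lam • (1 : Matrix (Fin p) (Fin p) ℝ) - T)⁻¹.mulVec s)⁻¹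
      * (α ⬝ᵥ (NormedSpace.exp
          (x • (T - lam • (1 : Matrix (Fin p) (Fin p) ℝ)))).mulVec s)) :
    ∀ x : ℝ, 0 ≤ x →
      flam x = ((wp + wm) / (α ⬝ᵥ (lam • (1 : Matrix (Fin p) (Fin p) ℝ) - T)⁻¹.mulVec s))
        * ((Sum.elim αhp αhm) ⬝ᵥ
            (NormedSpace.exp (x • Matrix.fromBlocks
                (Tp - lam • (1 : Matrix (Fin p) (Fin p) ℝ)) Tm
                Tm (Tp - lam • (1 : Matrix (Fin p) (Fin p) ℝ)))).mulVec (Sum.elim s (-s))) := by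
  intro x hx
  set A : Matrix (Fin p) (Fin p) ℝ := Tp - lam • (1 : Matrix (Fin p) (Fin p) ℝ) with hA
  set Z : ℝ := α ⬝ᵥ (lam • (1 : Matrix (Fin p) (Fin p) ℝ) - T)⁻¹.mulVec s with hZdef
  -- rewrite the block exponential applied to [s; -s]
  have hblock : x • Matrix.fromBlocks A Tm Tm A
      = Matrix.fromBlocks (x • A) (x • Tm) (x • Tm) (x • A) := by
    rw [Matrix.fromBlocks_smul]
  have hBsub : x • A - x • Tm = x • (T - lam • (1 : Matrix (Fin p) (Fin p) ℝ)) := by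
    rw [hA, hTdec, ← smul_sub]
    congr 1
    abel
  have hexp : (NormedSpace.exp (x • Matrix.fromBlocks A Tm Tm A)).mulVec (Sum.elim s (-s))
      = Sum.elim ((NormedSpace.exp
          (x • (T - lam • (1 : Matrix (Fin p) (Fin p) ℝ)))).mulVec s)
        (-((NormedSpace.exp
          (x • (T - lam • (1 : Matrix (Fin p) (Fin p) ℝ)))).mulVec s)) := by
    rw [hblock, aux_exp_fromBlocks_mulVec, hBsub]
  set u : Fin p → ℝ :=
    (NormedSpace.exp (x • (T - lam • (1 : Matrix (Fin p) (Fin p) ℝ)))).mulVec s with hu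
  -- nonnegativity of wp, wm
  have hwp0 : 0 ≤ wp := hwp ▸ Finset.sum_nonneg fun i _ => le_max_left _ _
  have hwm0 : 0 ≤ wm := hwm ▸ Finset.sum_nonneg fun i _ => le_max_left _ _
  -- the recombination identity
  have hrec : ∀ i, wp * αp i - wm * αm i = α i := by
    intro i
    have h1 : wp * αp i = max 0 (α i) := by
      rw [hαp i]
      by_cases hp : 0 < wp
      · rw [if_pos hp]; field_simp
      · rw [if_neg hp, mul_zero]
        have hwpz : wp = 0 := le_antisymm (not_lt.mp hp) hwp0
        have : max 0 (α i) = 0 := by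
          have hle : max 0 (α i) ≤ wp := by
            rw [hwp]
            exact Finset.single_le_sum (f := fun j => max 0 (α j))
              (fun j _ => le_max_left _ _) (Finset.mem_univ i)
          exact le_antisymm (hwpz ▸ hle) (le_max_left _ _)
        rw [this]
    have h2 : wm * αm i = max 0 (-(α i)) := by
      rw [hαm i]
      by_cases hm : 0 < wm
      · rw [if_pos hm]; field_simp
      · rw [if_neg hm, mul_zero]
        have hwmz : wm = 0 := le_antisymm (not_lt.mp hm) hwm0
        have : max 0 (-(α i)) = 0 := by
          have hle : max 0 (-(α i)) ≤ wm := by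
            rw [hwm]
            exact Finset.single_le_sum (f := fun j => max 0 (-(α j)))
              (fun j _ => le_max_left _ _) (Finset.mem_univ i)
          exact le_antisymm (hwmz ▸ hle) (le_max_left _ _)
        rw [this]
    rw [h1, h2]
    rcases le_total 0 (α i) with h | h
    · rw [max_eq_right h, max_eq_left (by linarith)]
      ring
    · rw [max_eq_left h, max_eq_right (by linarith)]
      ring
  -- combine the hat-vectors
  have hcomb : (wp + wm) • (αhp - αhm) = α := by
    funext i
    have hne : wp + wm ≠ 0 := ne_of_gt hw
    have := hrec i
    simp only [Pi.smul_apply, Pi.sub_apply, hαhp, hαhm, smul_eq_mul]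
    field_simp
    nlinarith [hrec i]
  -- compute the dot product
  have hdot : (Sum.elim αhp αhm) ⬝ᵥ (Sum.elim u (-u)) = (αhp - αhm) ⬝ᵥ u := by
    rw [sumElim_dotProduct_sumElim, dotProduct_neg, sub_dotProduct]
    ring
  rw [hflam x, hexp, hdot]
  have hfinal : ((wp + wm) • (αhp - αhm)) ⬝ᵥ u = α ⬝ᵥ u := by rw [hcomb]
  rw [← hfinal, smul_dotProduct, smul_eq_mul]
  ring
end

section
/- Let α = (1, 0, 0), T = [[−1, −1, 2/3],[1, −1, −2/3],[0, 0, −1]], s = (4/3, 2/3, 1)ᵀ. Then for all x ≥ 0, α e^{Tx} s = (2/3) e^{−x} (1 + cos x). -/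
open scoped Matrix

namespace Stmt11Aux

noncomputable section

def Tm : Matrix (Fin 3) (Fin 3) ℝ := !![(-1 : ℝ), -1, 2/3; 1, -1, -2/3; 0, 0, -1]
def Nm : Matrix (Fin 3) (Fin 3) ℝ := !![(0 : ℝ), -1, 2/3; 1, 0, -2/3; 0, 0, 0]
def N2 : Matrix (Fin 3) (Fin 3) ℝ := !![(-1 : ℝ), 0, 2/3; 0, -1, 2/3; 0, 0, 0]

lemma hT : Tm = -1 + Nm := by
  rw [Matrix.one_fin_three]
  norm_num [Tm, Nm, ← Matrix.ext_iff, Fin.forall_fin_succ]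

lemma hNN : Nm * Nm = N2 := by
  rw [Nm, Matrix.mul_fin_three]
  norm_num [N2, ← Matrix.ext_iff, Fin.forall_fin_succ]

lemma hNN2 : Nm * N2 = -Nm := by
  rw [Nm, N2, Matrix.mul_fin_three]
  norm_num [Nm, ← Matrix.ext_iff, Fin.forall_fin_succ]

/-- the candidate for `exp (t • Tm)` -/
def g (t : ℝ) : Matrix (Fin 3) (Fin 3) ℝ :=
  Real.exp (-t) • (1 + Real.sin t • Nm + (1 - Real.cos t) • N2)

lemma g_ode (t : ℝ) :
    Real.exp (-t) • (Real.cos t • Nm + Real.sin t • N2)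
        + (-Real.exp (-t)) • (1 + Real.sin t • Nm + (1 - Real.cos t) • N2) = Tm * g t := by
  rw [g, hT]
  rw [Matrix.mul_smul]
  simp only [mul_add, add_mul, neg_mul, one_mul, mul_one, neg_add_rev, mul_smul_comm,
    hNN, hNN2, smul_neg, smul_smul, smul_add, neg_one_mul]
  module

lemma key (t : ℝ) : NormedSpace.exp (t • Tm) = g t := by
  letI : SeminormedRing (Matrix (Fin 3) (Fin 3) ℝ) := Matrix.linftyOpSemiNormedRing
  letI : NormedRing (Matrix (Fin 3) (Fin 3) ℝ) := Matrix.linftyOpNormedRing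
  letI : NormedAlgebra ℝ (Matrix (Fin 3) (Fin 3) ℝ) := Matrix.linftyOpNormedAlgebra
  have g_deriv : ∀ t : ℝ, HasDerivAt g
      (Real.exp (-t) • (Real.cos t • Nm + Real.sin t • N2)
        + (-Real.exp (-t)) • (1 + Real.sin t • Nm + (1 - Real.cos t) • N2)) t := by
    intro t
    have h1 : HasDerivAt (fun t : ℝ => Real.exp (-t)) (-Real.exp (-t)) t := by
      simpa [Function.comp_def] using (Real.hasDerivAt_exp (-t)).comp t (hasDerivAt_neg t)
    have h2 : HasDerivAt (fun t : ℝ => (1 + Real.sin t • Nm + (1 - Real.cos t) • N2))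
        (Real.cos t • Nm + Real.sin t • N2) t := by
      have hs := (Real.hasDerivAt_sin t).smul_const Nm
      have hc : HasDerivAt (fun t : ℝ => (1 - Real.cos t)) (Real.sin t) t := by
        simpa using ((Real.hasDerivAt_cos t).const_sub 1)
      exact ((hs.const_add (1 : Matrix (Fin 3) (Fin 3) ℝ)).add (hc.smul_const N2))
    exact h1.smul h2
  set F : ℝ → Matrix (Fin 3) (Fin 3) ℝ := fun t => NormedSpace.exp (-(t • Tm)) * g t with hF
  have hFd : ∀ u : ℝ, HasDerivAt F 0 u := by
    intro u
    have h1 : HasDerivAt (fun v : ℝ => NormedSpace.exp (v • Tm))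
        (NormedSpace.exp ((-u) • Tm) * Tm) (-u) := hasDerivAt_exp_smul_const Tm (-u)
    have h2 : HasDerivAt (fun v : ℝ => NormedSpace.exp (-(v • Tm)))
        (-(NormedSpace.exp (-(u • Tm)) * Tm)) u := by
      have := h1.scomp u (hasDerivAt_neg u)
      simp [Function.comp_def, neg_smul] at this
      exact this
    have h3 := h2.mul (g_deriv u)
    rw [g_ode u] at h3
    simp [neg_mul, mul_assoc] at h3
    exact h3
  have hconst : ∀ u : ℝ, F u = F 0 := by
    intro u
    exact is_const_of_deriv_eq_zero (fun v => (hFd v).differentiableAt)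
      (fun v => (hFd v).deriv) u 0
  have hF0 : F 0 = 1 := by
    simp [hF, g, NormedSpace.exp_zero]
  have hFu : NormedSpace.exp (-(t • Tm)) * g t = 1 := (hconst t).trans hF0
  have hinv : NormedSpace.exp (t • Tm) * NormedSpace.exp (-(t • Tm)) = 1 := by
    rw [← Matrix.exp_add_of_commute _ _ ((Commute.refl (t • Tm)).neg_right)]
    simp [NormedSpace.exp_zero]
  calc NormedSpace.exp (t • Tm)
      = NormedSpace.exp (t • Tm) * (NormedSpace.exp (-(t • Tm)) * g t) := by
        rw [hFu, mul_one]
    _ = g t := by rw [← mul_assoc, hinv, one_mul]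

end

end Stmt11Aux

/-- For the concrete parameters (α,T,s) of the example, α e^{Tx} s = (2/3)e^{−x}(1+cos x). -/
theorem stmt11 :
    ∀ x : ℝ, 0 ≤ x →
      (![1, 0, 0] : Fin 3 → ℝ) ⬝ᵥ
          (NormedSpace.exp (x • (!![(-1 : ℝ), -1, 2/3; 1, -1, -2/3; 0, 0, -1]))).mulVec
            (![4/3, 2/3, 1] : Fin 3 → ℝ)
        = (2/3) * Real.exp (-x) * (1 + Real.cos x) := by
  intro x _
  rw [show (!![(-1 : ℝ), -1, 2/3; 1, -1, -2/3; 0, 0, -1]) = Stmt11Aux.Tm from rfl,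
    Stmt11Aux.key x, Stmt11Aux.g]
  simp [Stmt11Aux.Nm, Stmt11Aux.N2, Matrix.add_mulVec, Matrix.smul_mulVec,
    Matrix.mulVec, dotProduct, Fin.sum_univ_three, Matrix.one_apply]
  ring
end
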